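/- Let δ be a permutation of Z/nZ satisfying δ^{-1}(-k) = -δ(k) for all k in Z/nZ. Then for every orbit O of the cyclic group generated by δ acting on Z/nZ, the number of elements k in O with δ^m(-k) = k (for any fixed integer m) is at most 2 if |O| is even, and at most 1 if |O| is odd. -/

import Mathlib

theorem stmt_16 (n : ℕ) (hn : 0 < n) (δ : Equiv.Perm (ZMod n))
    (hanti : ∀ k : ZMod n, δ⁻¹ (-k) = -(δ k)) (m : ℤ) (a : ZMod n) :
    (Even (Set.ncard {k : ZMod n | ∃ j : ℤ, (δ ^ j) a = k}) →
      Set.ncard {k : ZMod n | (∃ j : ℤ, (δ ^ j) a = k) ∧ (δ ^ m) (-k) = k} ≤ 2) ∧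
    (Odd (Set.ncard {k : ZMod n | ∃ j : ℤ, (δ ^ j) a = k}) →
      Set.ncard {k : ZMod n | (∃ j : ℤ, (δ ^ j) a = k) ∧ (δ ^ m) (-k) = k} ≤ 1) := by
  haveI : NeZero n := ⟨hn.ne'⟩
  set S : Set (ZMod n) := {k : ZMod n | ∃ j : ℤ, (δ ^ j) a = k} with hSdef
  set T : Set (ZMod n) := {k : ZMod n | (∃ j : ℤ, (δ ^ j) a = k) ∧ (δ ^ m) (-k) = k}
    with hTdef
  set p : ℕ := MulAction.period δ a with hpdef
  have hppos : 0 < p := MulAction.period_pos_of_orderOf_pos (orderOf_pos δ) a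
  have hper : ∀ j : ℤ, (δ ^ j) a = a ↔ (p : ℤ) ∣ j := by
    intro j
    rw [show (δ ^ j) a = (δ ^ j) • a from rfl]
    exact MulAction.zpow_smul_eq_iff_period_dvd
  -- the negation permutation
  set ν : Equiv.Perm (ZMod n) := Equiv.neg (ZMod n) with hνdef
  have hν : ∀ k : ZMod n, ν k = -k := fun k => rfl
  have hνinv : ν⁻¹ = ν := rfl
  have hconj : ν * δ * ν⁻¹ = δ⁻¹ := by
    apply Equiv.ext
    intro k
    have h := hanti (δ⁻¹ k)
    simp only [Equiv.Perm.coe_inv, Equiv.apply_symm_apply] at h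
    have h2 : δ (-k) = -(δ⁻¹ k) := by
      have := congrArg δ h
      simp only [Equiv.Perm.coe_inv, Equiv.apply_symm_apply] at this
      rw [← this]; rfl
    simp only [Equiv.Perm.mul_apply, hνinv, hν, h2, neg_neg]
  have hL : ∀ (s : ℤ) (k : ZMod n), (δ ^ s) (-k) = -((δ ^ (-s)) k) := by
    intro s k
    have hc : ν * δ ^ s * ν⁻¹ = δ ^ (-s) := by
      rw [← conj_zpow, hconj, inv_zpow']
    have h := congrArg (fun f : Equiv.Perm (ZMod n) => f k) hc
    simp only [Equiv.Perm.mul_apply, hνinv, hν] at h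
    rw [← h, neg_neg]
  have hcomm : ∀ (x y : ℤ) (k : ZMod n), (δ ^ (x + y)) k = (δ ^ x) ((δ ^ y) k) := by
    intro x y k
    rw [zpow_add, Equiv.Perm.mul_apply]
  -- orbit cardinality equals p
  have hScard : S.ncard = p := by
    have hinj : Function.Injective (fun i : Fin p => (δ ^ (i : ℤ)) a) := by
      intro i j hij
      simp only at hij
      have h1 : (δ ^ ((i : ℤ) - (j : ℤ))) a = a := by
        apply (δ ^ (j : ℤ)).injective
        rw [← hcomm, show (j : ℤ) + ((i : ℤ) - (j : ℤ)) = (i : ℤ) by ring, hij]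
      have hd := (hper _).1 h1
      have hi : (i : ℤ) < p := by exact_mod_cast i.2
      have hj : (j : ℤ) < p := by exact_mod_cast j.2
      have hi0 : (0 : ℤ) ≤ (i : ℤ) := Int.natCast_nonneg _
      have hj0 : (0 : ℤ) ≤ (j : ℤ) := Int.natCast_nonneg _
      have h0 : (i : ℤ) - (j : ℤ) = 0 := Int.eq_zero_of_abs_lt_dvd hd (by
        rw [abs_sub_lt_iff]; omega)
      have : (i : ℤ) = j := by omega
      exact Fin.ext (by exact_mod_cast this)
    have hSeq : S = Set.range (fun i : Fin p => (δ ^ (i : ℤ)) a) := by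
      ext k
      constructor
      · rintro ⟨j, rfl⟩
        have h0 : 0 ≤ j % (p : ℤ) := Int.emod_nonneg j (by exact_mod_cast hppos.ne')
        have hlt : j % (p : ℤ) < p := Int.emod_lt_of_pos j (by exact_mod_cast hppos)
        refine ⟨⟨(j % (p : ℤ)).toNat, by omega⟩, ?_⟩
        simp only
        have hmod : (δ ^ (j % (p : ℤ))) a = (δ ^ j) a := MulAction.zpow_mod_period_smul (g := δ) (a := a) j
        rw [Int.toNat_of_nonneg h0, hmod]
      · rintro ⟨i, rfl⟩
        exact ⟨(i : ℤ), rfl⟩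
    rw [hSeq, ← Set.image_univ, Set.ncard_image_of_injective _ hinj, Set.ncard_univ,
      Nat.card_eq_fintype_card, Fintype.card_fin]
  -- main structure of T
  rcases T.eq_empty_or_nonempty with hT | ⟨k1, hk1⟩
  · exact ⟨fun _ => by rw [hT]; simp, fun _ => by rw [hT]; simp⟩
  obtain ⟨⟨t, ht⟩, h1⟩ := hk1
  -- key: every element of T is k1 or δ^(p/2) k1 (the latter only when p even)
  have key : ∀ k2 ∈ T, k2 = k1 ∨ (p % 2 = 0 ∧ k2 = (δ ^ ((p / 2 : ℕ) : ℤ)) k1) := by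
    rintro k2 ⟨⟨u, hu⟩, h2⟩
    set s : ℤ := u - t with hsdef
    have hk2 : (δ ^ s) k1 = k2 := by
      rw [← ht, ← hcomm, hsdef, sub_add_cancel, hu]
    have hneg : -k2 = (δ ^ (-s)) (-k1) := by
      have h := hL (-s) k1
      rw [neg_neg] at h
      rw [← hk2, h]
    have h3 : (δ ^ (-s)) k1 = k2 := by
      rw [hneg, ← hcomm, show m + -s = -s + m by ring, hcomm, h1] at h2
      exact h2
    have h4 : (δ ^ (2 * s)) k1 = k1 := by
      rw [show (2 : ℤ) * s = s + s by ring, hcomm, hk2, ← h3, ← hcomm,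
        show s + -s = (0 : ℤ) by ring, zpow_zero]
      rfl
    have hdvd : (p : ℤ) ∣ 2 * s := by
      apply (hper _).1
      apply (δ ^ t).injective
      rw [← hcomm, show t + 2 * s = 2 * s + t by ring, hcomm, ht, h4]
    rcases hdvd with ⟨c, hc⟩
    rcases Int.even_or_odd c with ⟨d, hd⟩ | ⟨d, hd⟩
    · left
      have hpc : (p : ℤ) * c = 2 * ((p : ℤ) * d) := by rw [hd]; ring
      have hs : s = (p : ℤ) * d := by omega
      rw [← hk2, ← ht, ← hcomm, show s + t = t + (p : ℤ) * d by rw [hs]; ring,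
        hcomm, (hper _).2 ⟨d, rfl⟩]
    · right
      have hpe' : p % 2 = 0 := by
        have hpc : (p : ℤ) * c = 2 * ((p : ℤ) * d) + p := by rw [hd]; ring
        have : (p : ℤ) % 2 = 0 := by omega
        omega
      refine ⟨hpe', ?_⟩
      have hhalfℕ : 2 * (p / 2) = p := by omega
      have hhalf : 2 * ((p / 2 : ℕ) : ℤ) = (p : ℤ) := by exact_mod_cast hhalfℕ
      have hpc : (p : ℤ) * c = 2 * ((p : ℤ) * d) + p := by rw [hd]; ring
      have hs : s = (p : ℤ) * d + ((p / 2 : ℕ) : ℤ) := by omega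
      rw [← hk2, ← ht, ← hcomm, show s + t = ((p / 2 : ℕ) : ℤ) + t + (p : ℤ) * d by
        rw [hs]; ring, hcomm _ ((p : ℤ) * d), (hper _).2 ⟨d, rfl⟩, hcomm]
  constructor
  · intro _
    have hsub : T ⊆ {k1, (δ ^ ((p / 2 : ℕ) : ℤ)) k1} := by
      intro k2 hk2
      rcases key k2 hk2 with h | ⟨_, h⟩
      · exact Or.inl h
      · exact Or.inr h
    calc T.ncard ≤ ({k1, (δ ^ ((p / 2 : ℕ) : ℤ)) k1} : Set (ZMod n)).ncard :=
          Set.ncard_le_ncard hsub (Set.toFinite _)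
      _ ≤ 2 := by
          refine le_trans (Set.ncard_insert_le _ _) ?_
          simp
  · intro hodd
    rw [hScard] at hodd
    have hpodd : p % 2 = 1 := Nat.odd_iff.1 hodd
    have hsub : T ⊆ {k1} := by
      intro k2 hk2
      rcases key k2 hk2 with h | ⟨h, _⟩
      · exact h
      · omega
    calc T.ncard ≤ ({k1} : Set (ZMod n)).ncard := Set.ncard_le_ncard hsub (Set.toFinite _)
      _ ≤ 1 := by simp
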